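/- Let S be a smooth symmetric 2-tensor field on the upper half-plane H² = {(x,y) ∈ ℝ² : y > 0}, with components S₁₁, S₁₂ = S₂₁, S₂₂. Then S is covariantly divergence free for the hyperbolic metric, i.e. ∇₁S_{1j} + ∇₂S_{2j} = 0 on H² for j = 1, 2 where ∇_k S_{ij} = ∂_k S_{ij} − Γ^l_{ki} S_{lj} − Γ^l_{kj} S_{il}, if and only if for each of the three Killing fields ω ∈ {x∂_x + y∂_y, ∂_x, (x² − y²)∂_x + 2xy∂_y}, writing ω = a∂_x + b∂_y, the 1-form *(S, ω) is closed, i.e. ∂_x(S₁₁ a + S₁₂ b) + ∂_y(S₂₁ a + S₂₂ b) = 0 on H². -/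

import Mathlib

/-- Partial derivative in the `i`-th coordinate direction on `ℝ²`. -/
noncomputable def pd (i : Fin 2) (f : (ℝ × ℝ) → ℝ) (z : ℝ × ℝ) : ℝ :=
  fderiv ℝ f z (![((1 : ℝ), (0 : ℝ)), ((0 : ℝ), (1 : ℝ))] i)

/-- The upper half-plane `H² = {(x, y) : y > 0}`. -/
def UHP : Set (ℝ × ℝ) := {z : ℝ × ℝ | 0 < z.2}

/-- The Christoffel symbols `Γ^l_{ki}` of the hyperbolic metric `y⁻²(dx² + dy²)`:
`Γ¹₁₂ = Γ¹₂₁ = −1/y`, `Γ²₁₁ = 1/y`, `Γ²₂₂ = −1/y`, all others zero. -/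
noncomputable def hypChristoffel (l k i : Fin 2) (z : ℝ × ℝ) : ℝ :=
  ![![![0, -1 / z.2], ![-1 / z.2, 0]], ![![1 / z.2, 0], ![0, -1 / z.2]]] l k i

/-- The covariant derivative `∇_k S_{ij} = ∂_k S_{ij} − Γ^l_{ki} S_{lj} − Γ^l_{kj} S_{il}`
of a 2-tensor `S` for the hyperbolic metric on the upper half-plane. -/
noncomputable def covDeriv (S : (ℝ × ℝ) → Fin 2 → Fin 2 → ℝ) (k i j : Fin 2)
    (z : ℝ × ℝ) : ℝ :=
  pd k (fun w => S w i j) z - (∑ l : Fin 2, hypChristoffel l k i z * S z l j)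
    - ∑ l : Fin 2, hypChristoffel l k j z * S z i l

/-- The three Killing fields `ω₀ = x∂_x + y∂_y`, `ω₁ = ∂_x`,
`ω₂ = (x² − y²)∂_x + 2xy∂_y` of the hyperbolic metric on the upper half-plane. -/
noncomputable def killingField : Fin 3 → (ℝ × ℝ) → ℝ × ℝ :=
  ![fun z => (z.1, z.2), fun _ => ((1 : ℝ), (0 : ℝ)),
    fun z => (z.1 ^ 2 - z.2 ^ 2, 2 * z.1 * z.2)]

lemma pd_add (f g : (ℝ × ℝ) → ℝ) (z : ℝ × ℝ) (hf : DifferentiableAt ℝ f z)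
    (hg : DifferentiableAt ℝ g z) (i : Fin 2) :
    pd i (fun w => f w + g w) z = pd i f z + pd i g z := by
  unfold pd; rw [fderiv_fun_add hf hg]; simp

lemma pd_mul (f g : (ℝ × ℝ) → ℝ) (z : ℝ × ℝ) (hf : DifferentiableAt ℝ f z)
    (hg : DifferentiableAt ℝ g z) (i : Fin 2) :
    pd i (fun w => f w * g w) z = pd i f z * g z + f z * pd i g z := by
  unfold pd; rw [fderiv_fun_mul hf hg]; simp; ring

lemma pd_fst (i : Fin 2) (z : ℝ × ℝ) :
    pd i (fun w : ℝ × ℝ => w.1) z = ![(1:ℝ), 0] i := by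
  rw [pd, (hasFDerivAt_fst (p := z)).fderiv]
  fin_cases i <;> simp

lemma pd_snd (i : Fin 2) (z : ℝ × ℝ) :
    pd i (fun w : ℝ × ℝ => w.2) z = ![(0:ℝ), 1] i := by
  rw [pd, (hasFDerivAt_snd (p := z)).fderiv]
  fin_cases i <;> simp

lemma pd_a2 (i : Fin 2) (z : ℝ × ℝ) :
    pd i (fun w : ℝ × ℝ => w.1 ^ 2 - w.2 ^ 2) z = ![2 * z.1, -(2 * z.2)] i := by
  have h1 : HasFDerivAt (fun w : ℝ × ℝ => w.1) (ContinuousLinearMap.fst ℝ ℝ ℝ) z := hasFDerivAt_fst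
  have h2 : HasFDerivAt (fun w : ℝ × ℝ => w.2) (ContinuousLinearMap.snd ℝ ℝ ℝ) z := hasFDerivAt_snd
  have h : HasFDerivAt (fun w : ℝ × ℝ => w.1 ^ 2 - w.2 ^ 2)
      ((2 * z.1) • ContinuousLinearMap.fst ℝ ℝ ℝ - (2 * z.2) • ContinuousLinearMap.snd ℝ ℝ ℝ) z := by
    have := (h1.fun_mul h1).sub (h2.fun_mul h2)
    simp only [pow_two]
    refine this.congr_fderiv ?_
    ext v <;> simp <;> ring
  rw [pd, h.fderiv]
  fin_cases i <;> simp

lemma pd_b2 (i : Fin 2) (z : ℝ × ℝ) :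
    pd i (fun w : ℝ × ℝ => 2 * w.1 * w.2) z = ![2 * z.2, 2 * z.1] i := by
  have h1 : HasFDerivAt (fun w : ℝ × ℝ => w.1) (ContinuousLinearMap.fst ℝ ℝ ℝ) z := hasFDerivAt_fst
  have h2 : HasFDerivAt (fun w : ℝ × ℝ => w.2) (ContinuousLinearMap.snd ℝ ℝ ℝ) z := hasFDerivAt_snd
  have h : HasFDerivAt (fun w : ℝ × ℝ => 2 * w.1 * w.2)
      ((2 * z.2) • ContinuousLinearMap.fst ℝ ℝ ℝ + (2 * z.1) • ContinuousLinearMap.snd ℝ ℝ ℝ) z := by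
    have := ((h1.const_mul 2).fun_mul h2)
    refine this.congr_fderiv ?_
    ext v <;> simp <;> ring
  rw [pd, h.fderiv]
  fin_cases i <;> simp

lemma key (S : (ℝ × ℝ) → Fin 2 → Fin 2 → ℝ) (z : ℝ × ℝ)
    (hS : S z 0 1 = S z 1 0)
    (hd : ∀ i j, DifferentiableAt ℝ (fun w => S w i j) z)
    (hz : 0 < z.2) (α : Fin 3) :
    pd 0 (fun w => S w 0 0 * (killingField α w).1 + S w 0 1 * (killingField α w).2) z +
      pd 1 (fun w => S w 1 0 * (killingField α w).1 + S w 1 1 * (killingField α w).2) z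
    = (killingField α z).1 * (covDeriv S 0 0 0 z + covDeriv S 1 1 0 z)
      + (killingField α z).2 * (covDeriv S 0 0 1 z + covDeriv S 1 1 1 z) := by
  have hzne : z.2 ≠ 0 := ne_of_gt hz
  have hda : DifferentiableAt ℝ (fun w : ℝ × ℝ => w.1) z := differentiableAt_fst
  have hdb : DifferentiableAt ℝ (fun w : ℝ × ℝ => w.2) z := differentiableAt_snd
  have hda2 : DifferentiableAt ℝ (fun w : ℝ × ℝ => w.1 ^ 2 - w.2 ^ 2) z :=
    (hda.pow 2).sub (hdb.pow 2)
  have hdb2 : DifferentiableAt ℝ (fun w : ℝ × ℝ => 2 * w.1 * w.2) z :=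
    ((hda.const_mul 2).mul hdb)
  fin_cases α
  · -- ω₀ = (x, y)
    simp only [killingField, Fin.mk_zero, Fin.isValue, Matrix.cons_val_zero]
    rw [pd_add _ _ _ ((hd 0 0).fun_mul hda) ((hd 0 1).fun_mul hdb),
        pd_add _ _ _ ((hd 1 0).fun_mul hda) ((hd 1 1).fun_mul hdb),
        pd_mul _ _ _ (hd 0 0) hda, pd_mul _ _ _ (hd 0 1) hdb,
        pd_mul _ _ _ (hd 1 0) hda, pd_mul _ _ _ (hd 1 1) hdb,
        pd_fst, pd_fst, pd_snd, pd_snd]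
    simp only [covDeriv, hypChristoffel, Fin.sum_univ_two, Matrix.cons_val_zero,
      Matrix.cons_val_one, Matrix.head_cons]
    field_simp
    ring_nf
    rw [hS]
    ring
  · -- ω₁ = (1, 0)
    simp only [killingField, Fin.mk_one, Fin.isValue, Matrix.cons_val_one, Matrix.head_cons, Matrix.cons_val_zero]
    simp only [mul_one, mul_zero, add_zero]
    simp only [covDeriv, hypChristoffel, Fin.sum_univ_two, Matrix.cons_val_zero,
      Matrix.cons_val_one, Matrix.head_cons]
    field_simp
    ring_nf
    rw [hS]
    ring
  · -- ω₂ = (x² − y², 2xy)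
    have h2 : (⟨2, by norm_num⟩ : Fin 3) = 2 := rfl
    simp only [killingField, h2, Fin.isValue, Matrix.cons_val_two, Matrix.tail_cons, Matrix.head_cons]
    rw [pd_add _ _ _ ((hd 0 0).fun_mul hda2) ((hd 0 1).fun_mul hdb2),
        pd_add _ _ _ ((hd 1 0).fun_mul hda2) ((hd 1 1).fun_mul hdb2),
        pd_mul _ _ _ (hd 0 0) hda2, pd_mul _ _ _ (hd 0 1) hdb2,
        pd_mul _ _ _ (hd 1 0) hda2, pd_mul _ _ _ (hd 1 1) hdb2,
        pd_a2, pd_a2, pd_b2, pd_b2]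
    simp only [covDeriv, hypChristoffel, Fin.sum_univ_two, Matrix.cons_val_zero,
      Matrix.cons_val_one, Matrix.head_cons]
    field_simp
    ring_nf
    rw [hS]
    ring

lemma uhp_open : IsOpen UHP := isOpen_lt continuous_const continuous_snd

/-- A smooth symmetric 2-tensor `S` on the upper half-plane is covariantly divergence
free for the hyperbolic metric (`∇₁S_{1j} + ∇₂S_{2j} = 0` for `j = 1, 2`) iff for each
of the three Killing fields `ω = a∂_x + b∂_y` the 1-form `*(S, ω)` is closed, i.e.
`∂_x(S₁₁a + S₁₂b) + ∂_y(S₂₁a + S₂₂b) = 0`. -/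
theorem div_free_iff_noether_forms_closed
    (S : (ℝ × ℝ) → Fin 2 → Fin 2 → ℝ)
    (hsymm : ∀ z ∈ UHP, ∀ i j, S z i j = S z j i)
    (hsmooth : ∀ i j, ContDiffOn ℝ (⊤ : ℕ∞) (fun z => S z i j) UHP) :
    (∀ z ∈ UHP, ∀ j : Fin 2, covDeriv S 0 0 j z + covDeriv S 1 1 j z = 0) ↔
    (∀ α : Fin 3, ∀ z ∈ UHP,
      pd 0 (fun w => S w 0 0 * (killingField α w).1 + S w 0 1 * (killingField α w).2) z +
      pd 1 (fun w => S w 1 0 * (killingField α w).1 + S w 1 1 * (killingField α w).2) z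
        = 0) := by
  have hd : ∀ z ∈ UHP, ∀ i j, DifferentiableAt ℝ (fun w => S w i j) z := by
    intro z hz i j
    exact ((hsmooth i j).differentiableOn (by norm_num)).differentiableAt
      (uhp_open.mem_nhds hz)
  constructor
  · intro hdiv α z hz
    rw [key S z (hsymm z hz 0 1) (hd z hz) hz α, hdiv z hz 0, hdiv z hz 1]
    ring
  · intro hN z hz j
    have h1 := hN 1 z hz
    rw [key S z (hsymm z hz 0 1) (hd z hz) hz 1] at h1
    simp only [killingField, Matrix.cons_val_one, Matrix.head_cons, Matrix.cons_val_zero] at h1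
    have hD0 : covDeriv S 0 0 0 z + covDeriv S 1 1 0 z = 0 := by linarith
    have h0 := hN 0 z hz
    rw [key S z (hsymm z hz 0 1) (hd z hz) hz 0] at h0
    simp only [killingField, Matrix.cons_val_zero] at h0
    rw [hD0, mul_zero, zero_add] at h0
    have hD1 : covDeriv S 0 0 1 z + covDeriv S 1 1 1 z = 0 :=
      (mul_eq_zero.mp h0).resolve_left (ne_of_gt hz)
    fin_cases j
    · exact hD0
    · exact hD1
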